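/- Let μ and κ be infinite cardinals, λ a nonzero cardinal, I = ^λ([μ]^{<κ}), and let X = ∏_{j∈J} X_j be a product of nonempty topological spaces. Then X satisfies R(λ,μ;<κ) if and only if for every choice, for each j ∈ J, of an I-indexed sequence (x_{f,j})_{f∈I} of elements of X_j, there exists a single functionally regular ultrafilter D over I such that for every j ∈ J the sequence (x_{f,j})_{f∈I} has a D-limit point in X_j. -/

import Mathlib

open Cardinal Set Filter

universe u

/-- `X` satisfies `R(λ,μ;<κ)` where the index set `λ` is (the cardinality of) the type `L`:
for every `L`-indexed sequence of open covers of `X`, each of cardinality `≤ mu`, one can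
select subfamilies of cardinality `< kappa` whose union is a cover of `X`. -/
def SatisfiesR (X : Type u) [TopologicalSpace X] (L : Type u) (mu kappa : Cardinal.{u}) : Prop :=
  ∀ U : L → Set (Set X),
    (∀ a, ∀ u ∈ U a, IsOpen u) →
    (∀ a, ⋃₀ U a = Set.univ) →
    (∀ a, #(U a) ≤ mu) →
    ∃ V : L → Set (Set X),
      (∀ a, V a ⊆ U a) ∧ (∀ a, #(V a) < kappa) ∧ ⋃₀ (⋃ a, V a) = Set.univ

/-- `p` is an `F`-limit point of the sequence `x`. -/
def IsFLimit {I : Type*} {X : Type*} [TopologicalSpace X] (F : Filter I) (x : I → X) (p : X) : Prop :=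
  ∀ U : Set X, IsOpen U → p ∈ U → {i | x i ∈ U} ∈ F

/-- An ultrafilter `D` over `I = ^λ([μ]^{<κ})` (functions from `L` to subsets of `M` of
cardinality `< kappa`) is functionally regular if there is `a : L` such that
`{f | b ∈ f a} ∈ D` for every `b : M`. -/
def FunReg {L M : Type u} (kappa : Cardinal.{u})
    (D : Ultrafilter (L → {s : Set M // #s < kappa})) : Prop :=
  ∃ a : L, ∀ b : M, {f : L → {s : Set M // #s < kappa} | b ∈ (f a : Set M)} ∈ D

/-- Corollary 1.5 (1)⇔(2): a product satisfies `R(λ,μ;<κ)` (with `μ = #M` infinite and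
`κ` infinite) iff for every choice of `I`-indexed sequences, one in each factor, there is
a single functionally regular ultrafilter `D` over `I = ^λ([μ]^{<κ})` such that each
sequence has a `D`-limit point in its factor. -/
theorem stmt7 (L M : Type u) [Nonempty L] [Infinite M]
    (kappa : Cardinal.{u}) (hkappa : ℵ₀ ≤ kappa)
    (J : Type u) (X : J → Type u) [∀ j, TopologicalSpace (X j)] [∀ j, Nonempty (X j)] :
    SatisfiesR (∀ j, X j) L (#M) kappa ↔
      ∀ x : ∀ j : J, (L → {s : Set M // #s < kappa}) → X j,
        ∃ D : Ultrafilter (L → {s : Set M // #s < kappa}),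
          FunReg kappa D ∧ ∀ j : J, ∃ p : X j, IsFLimit (D : Filter _) (x j) p := by
  classical
  constructor
  · -- forward direction
    intro hR x
    set y : (L → {s : Set M // #s < kappa}) → ∀ j, X j := fun f j => x j f with hy
    by_cases hcase : ∃ (a : L) (p : ∀ j, X j), ∀ U : Set (∀ j, X j), IsOpen U → p ∈ U →
        ∀ S : Finset M, ∃ f : L → {s : Set M // #s < kappa},
          (↑S : Set M) ⊆ ↑(f a) ∧ y f ∈ U
    · obtain ⟨a, p, hp⟩ := hcase
      set s : Set (Set (L → {s : Set M // #s < kappa})) :=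
        {t | ∃ U : Set (∀ j, X j), IsOpen U ∧ p ∈ U ∧ t = y ⁻¹' U} ∪
        {t | ∃ b : M, t = {f : L → {s : Set M // #s < kappa} | b ∈ (f a : Set M)}} with hs
      have key : ∀ t : Set (Set (L → {s : Set M // #s < kappa})), t.Finite → t ⊆ s →
          ∃ (W : Set (∀ j, X j)) (S : Finset M), IsOpen W ∧ p ∈ W ∧
            (y ⁻¹' W) ∩ {f : L → {s : Set M // #s < kappa} | (↑S : Set M) ⊆ ↑(f a)} ⊆ ⋂₀ t := by
        intro t htfin
        refine Set.Finite.induction_on t htfin ?_ ?_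
        · intro _
          exact ⟨univ, ∅, isOpen_univ, mem_univ _, by simp⟩
        · intro v t0 hvt0 ht0fin ih hsub
          obtain ⟨W, S, hW, hpW, hWS⟩ := ih (fun w hw => hsub (mem_insert_of_mem _ hw))
          rcases hsub (mem_insert v t0) with ⟨U, hU, hpU, rfl⟩ | ⟨b, rfl⟩
          · refine ⟨W ∩ U, S, hW.inter hU, ⟨hpW, hpU⟩, ?_⟩
            rintro f ⟨⟨hfW, hfU⟩, hfS⟩
            rw [sInter_insert]
            exact ⟨hfU, hWS ⟨hfW, hfS⟩⟩
          · refine ⟨W, insert b S, hW, hpW, ?_⟩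
            rintro f ⟨hfW, hfS⟩
            rw [sInter_insert]
            have hcoe : (↑(insert b S) : Set M) = insert b (↑S : Set M) := by
              simp
            rw [hcoe] at hfS
            exact ⟨hfS (mem_insert b _), hWS ⟨hfW, fun c hc => hfS (mem_insert_of_mem _ hc)⟩⟩
      have hne : (Filter.generate s).NeBot := by
        rw [Filter.generate_neBot_iff]
        intro t hts htfin
        obtain ⟨W, S, hW, hpW, hsub⟩ := key t htfin hts
        obtain ⟨f, hfS, hfW⟩ := hp W hW hpW S
        exact ⟨f, hsub ⟨hfW, hfS⟩⟩
      obtain ⟨D, hD⟩ := Ultrafilter.exists_le (Filter.generate s)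
      refine ⟨D, ⟨a, fun b => hD (Filter.mem_generate_of_mem (Or.inr ⟨b, rfl⟩))⟩,
        fun j => ⟨p j, ?_⟩⟩
      intro U hU hpU
      have heq : {i : L → {s : Set M // #s < kappa} | x j i ∈ U} =
          y ⁻¹' ((fun q : ∀ j, X j => q j) ⁻¹' U) := rfl
      rw [heq]
      exact hD (Filter.mem_generate_of_mem
        (Or.inl ⟨_, (continuous_apply j).isOpen_preimage U hU, hpU, rfl⟩))
    · exfalso
      push_neg at hcase
      set Uc : L → Set (Set (∀ j, X j)) := fun a =>
        Set.range (fun S : Finset M =>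
          (closure (y '' {f : L → {s : Set M // #s < kappa} | (↑S : Set M) ⊆ ↑(f a)}))ᶜ)
        with hUc
      have hopen : ∀ a, ∀ u ∈ Uc a, IsOpen u := by
        rintro a u ⟨S, rfl⟩
        exact isClosed_closure.isOpen_compl
      have hcover : ∀ a, ⋃₀ Uc a = Set.univ := by
        intro a
        rw [Set.eq_univ_iff_forall]
        intro p
        obtain ⟨U, hU, hpU, S, hS⟩ := hcase a p
        refine ⟨_, ⟨S, rfl⟩, ?_⟩
        intro hcl
        rw [mem_closure_iff] at hcl
        obtain ⟨w, hwU, g, hgB, rfl⟩ := hcl U hU hpU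
        exact hS g hgB hwU
      have hcard : ∀ a, #(Uc a) ≤ #M := fun a =>
        (Cardinal.mk_range_le).trans (le_of_eq (Cardinal.mk_finset_of_infinite M))
      obtain ⟨V, hVsub, hVcard, hVcover⟩ := hR Uc hopen hcover hcard
      have hw : ∀ a, ∀ v ∈ V a, ∃ S : Finset M,
          (closure (y '' {f : L → {s : Set M // #s < kappa} | (↑S : Set M) ⊆ ↑(f a)}))ᶜ = v :=
        fun a v hv => hVsub a hv
      choose Sw hSw using hw
      have hcardF : ∀ a : L, #(⋃ (v : V a), (↑(Sw a v v.2) : Set M)) < kappa := by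
        intro a
        rcases eq_or_lt_of_le hkappa with heq | hlt
        · rw [← heq] at hVcard ⊢
          have hfinV : Finite (V a) := Cardinal.mk_lt_aleph0_iff.mp (hVcard a)
          have hfin : (⋃ (v : V a), (↑(Sw a v v.2) : Set M)).Finite :=
            Set.finite_iUnion fun v => (Sw a v v.2).finite_toSet
          exact hfin.lt_aleph0
        · calc #(⋃ (v : V a), (↑(Sw a v v.2) : Set M))
              ≤ Cardinal.sum (fun v : V a => #(↑(Sw a v v.2) : Set M)) :=
                Cardinal.mk_iUnion_le_sum_mk
            _ ≤ Cardinal.sum (fun _ : V a => ℵ₀) :=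
                Cardinal.sum_le_sum _ _ fun v => Cardinal.mk_le_aleph0
            _ = #(V a) * ℵ₀ := Cardinal.sum_const' _ _
            _ < kappa := Cardinal.mul_lt_of_lt hkappa (hVcard a) hlt
      set F : L → {s : Set M // #s < kappa} :=
        fun a => ⟨⋃ (v : V a), (↑(Sw a v v.2) : Set M), hcardF a⟩ with hF
      have hyF : y F ∈ ⋃₀ ⋃ a, V a := hVcover ▸ mem_univ _
      obtain ⟨v, hv, hyv⟩ := hyF
      obtain ⟨a, hva⟩ := mem_iUnion.mp hv
      rw [← hSw a v hva] at hyv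
      apply hyv
      apply subset_closure
      refine ⟨F, ?_, rfl⟩
      intro b hb
      exact mem_iUnion.mpr ⟨⟨v, hva⟩, hb⟩
  · -- backward direction
    intro h U hUopen hUcover hUcard
    have hne : ∀ a, (U a).Nonempty := by
      intro a
      obtain ⟨q⟩ : Nonempty (∀ j, X j) := inferInstance
      have hq : q ∈ ⋃₀ U a := (hUcover a) ▸ mem_univ q
      obtain ⟨v, hv, _⟩ := hq
      exact ⟨v, hv⟩
    have hu : ∀ a, ∃ u : M → Set (∀ j, X j), (∀ b, u b ∈ U a) ∧ ∀ v ∈ U a, ∃ b, u b = v := by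
      intro a
      obtain ⟨e⟩ := Cardinal.le_def _ _ |>.mp (hUcard a)
      have : Nonempty ↥(U a) := (hne a).to_subtype
      refine ⟨fun b => ↑(Function.invFun e b), fun b => (Function.invFun e b).2, fun v hv => ?_⟩
      obtain ⟨b, hb⟩ := Function.invFun_surjective e.injective ⟨v, hv⟩
      exact ⟨b, congrArg Subtype.val hb⟩
    choose u hu1 hu2 using hu
    by_cases hex : ∃ f : L → {s : Set M // #s < kappa},
        ⋃₀ (⋃ a, u a '' (↑(f a) : Set M)) = Set.univ
    · obtain ⟨f, hf⟩ := hex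
      refine ⟨fun a => u a '' ↑(f a), fun a => ?_, fun a => ?_, hf⟩
      · rintro v ⟨b, _, rfl⟩
        exact hu1 a b
      · exact lt_of_le_of_lt Cardinal.mk_image_le (f a).2
    · push_neg at hex
      have hx : ∀ f : L → {s : Set M // #s < kappa},
          ∃ w, w ∉ ⋃₀ (⋃ a, u a '' (↑(f a) : Set M)) :=
        fun f => (Set.ne_univ_iff_exists_notMem _).mp (hex f)
      choose z hz using hx
      obtain ⟨D, ⟨a, hreg⟩, hlim⟩ := h (fun j f => z f j)
      choose p hp using hlim
      have hq : (p : ∀ j, X j) ∈ ⋃₀ U a := (hUcover a) ▸ mem_univ _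
      obtain ⟨v, hv, hpv⟩ := hq
      obtain ⟨b, rfl⟩ := hu2 a v hv
      obtain ⟨t, W, hW, hWsub⟩ := (isOpen_pi_iff.mp (hUopen a _ hv)) p hpv
      have hmem : {f : L → {s : Set M // #s < kappa} | z f ∈ (↑t : Set J).pi W} ∈ D := by
        have heq : {f : L → {s : Set M // #s < kappa} | z f ∈ (↑t : Set J).pi W} =
            ⋂ j ∈ t, {f : L → {s : Set M // #s < kappa} | z f j ∈ W j} := by
          ext f
          simp [Set.mem_pi]
        rw [heq]
        exact (Filter.biInter_finset_mem t).mpr fun j hj => hp j (W j) (hW j hj).1 (hW j hj).2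
      obtain ⟨f, hfb, hfz⟩ := Ultrafilter.nonempty_of_mem (inter_mem (hreg b) hmem)
      exact absurd ⟨u a b, mem_iUnion.mpr ⟨a, ⟨b, hfb, rfl⟩⟩, hWsub hfz⟩ (hz f)
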